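/- arXiv:1203.3405 — 10 statements merged into one kernel-verified Lean document; each statement's English description precedes it below -/
import Mathlib

section
/- Let T: [0,1) → [0,1) be an interval translation map of two intervals with T(x) = x + γ₁ on [0, β₁) and T(x) = x + γ₂ on [β₁, 1), where γ₁ > 0, γ₂ < 0, β₁ + γ₁ ≤ 1, β₁ + γ₂ ≥ 0. Then for every x ∈ [0,1) there exists n with 1 ≤ n ≤ max(⌊β₁/γ₁⌋, ⌊(1-β₁)/|γ₂|⌋) + 1 such that Tⁿ(x) ∈ [β₁ + γ₂, β₁ + γ₁). In particular Δ = [β₁ + γ₂, β₁ + γ₁) is a regular interval for T. -/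
private lemma itm_up (β₁ γ₁ γ₂ : ℝ) (T : ℝ → ℝ)
    (hγ₁ : 0 < γ₁) (hγ₂ : γ₂ < 0)
    (hT₁ : ∀ x ∈ Set.Ico (0:ℝ) β₁, T x = x + γ₁) :
    ∀ k : ℕ, ∀ x : ℝ, 0 ≤ x → x < β₁ + γ₂ → β₁ + γ₂ ≤ x + k * γ₁ →
      ∃ n : ℕ, 1 ≤ n ∧ n ≤ k ∧ T^[n] x ∈ Set.Ico (β₁ + γ₂) (β₁ + γ₁) := by
  intro k
  induction k with
  | zero => intro x hx0 hx1 hx2; exfalso; push_cast at hx2; linarith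
  | succ k ih =>
    intro x hx0 hx1 hx2
    have hxβ : x < β₁ := by linarith
    have hTx : T x = x + γ₁ := hT₁ x ⟨hx0, hxβ⟩
    by_cases h : β₁ + γ₂ ≤ x + γ₁
    · refine ⟨1, le_refl 1, Nat.one_le_iff_ne_zero.mpr (by simp), ?_⟩
      rw [Function.iterate_one, hTx]
      exact ⟨h, by linarith⟩
    · push_neg at h
      have hx0' : (0:ℝ) ≤ x + γ₁ := by linarith
      have hx2' : β₁ + γ₂ ≤ (x + γ₁) + k * γ₁ := by push_cast at hx2 ⊢; linarith
      obtain ⟨n, hn1, hnk, hmem⟩ := ih (x + γ₁) hx0' h hx2'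
      refine ⟨n + 1, by omega, by omega, ?_⟩
      rw [Function.iterate_succ_apply, hTx]
      exact hmem

private lemma itm_down (β₁ γ₁ γ₂ : ℝ) (T : ℝ → ℝ)
    (hγ₁ : 0 < γ₁) (hγ₂ : γ₂ < 0) (h₁ : β₁ + γ₁ ≤ 1)
    (hT₂ : ∀ x ∈ Set.Ico β₁ (1:ℝ), T x = x + γ₂) :
    ∀ k : ℕ, ∀ x : ℝ, β₁ + γ₁ ≤ x → x < 1 → x + k * γ₂ < β₁ + γ₁ →
      ∃ n : ℕ, 1 ≤ n ∧ n ≤ k ∧ T^[n] x ∈ Set.Ico (β₁ + γ₂) (β₁ + γ₁) := by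
  intro k
  induction k with
  | zero => intro x hx0 hx1 hx2; exfalso; push_cast at hx2; linarith
  | succ k ih =>
    intro x hx0 hx1 hx2
    have hxβ : β₁ ≤ x := by linarith
    have hTx : T x = x + γ₂ := hT₂ x ⟨hxβ, hx1⟩
    by_cases h : x + γ₂ < β₁ + γ₁
    · refine ⟨1, le_refl 1, Nat.one_le_iff_ne_zero.mpr (by simp), ?_⟩
      rw [Function.iterate_one, hTx]
      exact ⟨by linarith, h⟩
    · push_neg at h
      have hx1' : x + γ₂ < 1 := by linarith
      have hx2' : (x + γ₂) + k * γ₂ < β₁ + γ₁ := by push_cast at hx2 ⊢; linarith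
      obtain ⟨n, hn1, hnk, hmem⟩ := ih (x + γ₂) h hx1' hx2'
      refine ⟨n + 1, by omega, by omega, ?_⟩
      rw [Function.iterate_succ_apply, hTx]
      exact hmem

/-- For an ITM of two intervals with `γ₁ > 0 > γ₂`, every point of `[0,1)`
enters `Δ = [β₁ + γ₂, β₁ + γ₁)` within `max(⌊β₁/γ₁⌋, ⌊(1-β₁)/|γ₂|⌋) + 1`
iterates; in particular `Δ` is a regular interval for `T`. -/
theorem two_itm_regular (β₁ γ₁ γ₂ : ℝ) (T : ℝ → ℝ)
    (hβ₁ : 0 < β₁) (hβ₁' : β₁ < 1)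
    (hγ₁ : 0 < γ₁) (hγ₂ : γ₂ < 0)
    (h₁ : β₁ + γ₁ ≤ 1) (h₂ : 0 ≤ β₁ + γ₂)
    (hT₁ : ∀ x ∈ Set.Ico (0:ℝ) β₁, T x = x + γ₁)
    (hT₂ : ∀ x ∈ Set.Ico β₁ (1:ℝ), T x = x + γ₂) :
    ∀ x ∈ Set.Ico (0:ℝ) 1, ∃ n : ℕ, 1 ≤ n ∧
      (n : ℤ) ≤ max ⌊β₁ / γ₁⌋ ⌊(1 - β₁) / (-γ₂)⌋ + 1 ∧
      T^[n] x ∈ Set.Ico (β₁ + γ₂) (β₁ + γ₁) := by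
  intro x hx
  obtain ⟨hx0, hx1⟩ := hx
  have hf1 : (0:ℤ) ≤ ⌊β₁ / γ₁⌋ := Int.le_floor.mpr (by
    push_cast; exact div_nonneg hβ₁.le hγ₁.le)
  have hf2 : (0:ℤ) ≤ ⌊(1 - β₁) / (-γ₂)⌋ := Int.le_floor.mpr (by
    push_cast; exact div_nonneg (by linarith) (by linarith))
  have hmax1 : (1:ℤ) ≤ max ⌊β₁ / γ₁⌋ ⌊(1 - β₁) / (-γ₂)⌋ + 1 := by
    have := le_max_left ⌊β₁ / γ₁⌋ ⌊(1 - β₁) / (-γ₂)⌋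
    omega
  rcases lt_or_ge x (β₁ + γ₂) with hlo | hge
  · -- climb up
    set k : ℕ := (⌊β₁ / γ₁⌋ + 1).toNat with hk
    have hkz : (k : ℤ) = ⌊β₁ / γ₁⌋ + 1 := Int.toNat_of_nonneg (by omega)
    have hreach : β₁ + γ₂ ≤ x + k * γ₁ := by
      have h2 : β₁ / γ₁ < (k : ℝ) := by
        have := Int.lt_floor_add_one (β₁ / γ₁)
        have : (β₁ / γ₁ : ℝ) < ((⌊β₁ / γ₁⌋ + 1 : ℤ) : ℝ) := by push_cast; linarith
        calc (β₁ / γ₁ : ℝ) < ((⌊β₁ / γ₁⌋ + 1 : ℤ) : ℝ) := this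
          _ = (k : ℝ) := by rw [← hkz]; push_cast; ring
      have h3 : β₁ < k * γ₁ := by
        have := (div_lt_iff₀ hγ₁).mp h2
        linarith
      nlinarith
    obtain ⟨n, hn1, hnk, hmem⟩ := itm_up β₁ γ₁ γ₂ T hγ₁ hγ₂ hT₁ k x hx0 hlo hreach
    refine ⟨n, hn1, ?_, hmem⟩
    have : (n : ℤ) ≤ (k : ℤ) := by exact_mod_cast hnk
    have hle : ⌊β₁ / γ₁⌋ ≤ max ⌊β₁ / γ₁⌋ ⌊(1 - β₁) / (-γ₂)⌋ := le_max_left _ _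
    omega
  rcases lt_or_ge x (β₁ + γ₁) with hmid | hhi
  · -- already in Δ: one more step stays in Δ
    refine ⟨1, le_refl 1, hmax1, ?_⟩
    rw [Function.iterate_one]
    rcases lt_or_ge x β₁ with hxb | hxb
    · have hTx : T x = x + γ₁ := hT₁ x ⟨hx0, hxb⟩
      rw [hTx]; exact ⟨by linarith, by linarith⟩
    · have hTx : T x = x + γ₂ := hT₂ x ⟨hxb, hx1⟩
      rw [hTx]; exact ⟨by linarith, by linarith⟩
  · -- descend
    set k : ℕ := (⌊(1 - β₁) / (-γ₂)⌋ + 1).toNat with hk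
    have hkz : (k : ℤ) = ⌊(1 - β₁) / (-γ₂)⌋ + 1 := Int.toNat_of_nonneg (by omega)
    have hγ₂' : (0:ℝ) < -γ₂ := by linarith
    have hreach : x + k * γ₂ < β₁ + γ₁ := by
      have h2 : (1 - β₁) / (-γ₂) < (k : ℝ) := by
        have := Int.lt_floor_add_one ((1 - β₁) / (-γ₂))
        have h' : ((1 - β₁) / (-γ₂) : ℝ) < ((⌊(1 - β₁) / (-γ₂)⌋ + 1 : ℤ) : ℝ) := by
          push_cast; linarith
        calc ((1 - β₁) / (-γ₂) : ℝ) < ((⌊(1 - β₁) / (-γ₂)⌋ + 1 : ℤ) : ℝ) := h'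
          _ = (k : ℝ) := by rw [← hkz]; push_cast; ring
      have h3 : 1 - β₁ < k * (-γ₂) := by
        have := (div_lt_iff₀ hγ₂').mp h2
        linarith
      nlinarith
    obtain ⟨n, hn1, hnk, hmem⟩ := itm_down β₁ γ₁ γ₂ T hγ₁ hγ₂ h₁ hT₂ k x hhi hx1 hreach
    refine ⟨n, hn1, ?_, hmem⟩
    have : (n : ℤ) ≤ (k : ℤ) := by exact_mod_cast hnk
    have hle : ⌊(1 - β₁) / (-γ₂)⌋ ≤ max ⌊β₁ / γ₁⌋ ⌊(1 - β₁) / (-γ₂)⌋ := le_max_right _ _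
    omega
end

section
/- Let T be an interval translation map of d intervals on Ω = [0,1), with translation vector (γ₁,...,γ_d), γ₁ > 0, γ_d < 0, and suppose Δ₁ ∩ T(Ω) ≠ ∅ and Δ_d ∩ T(Ω) ≠ ∅. Let I₋ = {i : γᵢ < 0} and I₊ = {i : γᵢ > 0}, and set δ₀ = min_{i ∈ I₋}(β_{i-1} + γᵢ), δ₁ = max_{i ∈ I₊}(β_i + γᵢ). Then Δ = [δ₀, δ₁) satisfies T(Δ) ⊆ Δ. -/
/-- For an ITM of `d` intervals in the irreducible case, with
`δ₀ = min_{γᵢ<0}(β_{i-1}+γᵢ)` and `δ₁ = max_{γᵢ>0}(βᵢ+γᵢ)`, the interval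
`Δ = [δ₀, δ₁)` is forward invariant: `T(Δ) ⊆ Δ`. -/
theorem fitting_trap
    (d : ℕ) (hd : 0 < d) (β : Fin (d + 1) → ℝ) (γ : Fin d → ℝ) (T : ℝ → ℝ)
    (hβ : StrictMono β) (hβ0 : β 0 = 0) (hβd : β (Fin.last d) = 1)
    (hγ : ∀ i, γ i ≠ 0)
    (hT : ∀ i : Fin d, ∀ x ∈ Set.Ico (β i.castSucc) (β i.succ), T x = x + γ i)
    (hmap : Set.MapsTo T (Set.Ico 0 1) (Set.Ico 0 1))
    (hγ₁ : 0 < γ ⟨0, hd⟩) (hγd : γ ⟨d - 1, Nat.sub_lt hd one_pos⟩ < 0)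
    (hΔ₁ : (Set.Ico (β (⟨0, hd⟩ : Fin d).castSucc) (β (⟨0, hd⟩ : Fin d).succ) ∩
      T '' Set.Ico 0 1).Nonempty)
    (hΔd : (Set.Ico (β (⟨d - 1, Nat.sub_lt hd one_pos⟩ : Fin d).castSucc)
      (β (⟨d - 1, Nat.sub_lt hd one_pos⟩ : Fin d).succ) ∩ T '' Set.Ico 0 1).Nonempty)
    (δ₀ δ₁ : ℝ)
    (j : Fin d) (hj : γ j < 0) (hδ₀ : δ₀ = β j.castSucc + γ j)
    (hδ₀min : ∀ i, γ i < 0 → δ₀ ≤ β i.castSucc + γ i)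
    (k : Fin d) (hk : 0 < γ k) (hδ₁ : δ₁ = β k.succ + γ k)
    (hδ₁max : ∀ i, 0 < γ i → β i.succ + γ i ≤ δ₁)
    : T '' Set.Ico δ₀ δ₁ ⊆ Set.Ico δ₀ δ₁ := by
  rintro _ ⟨x, ⟨hxl, hxr⟩, rfl⟩
  -- δ₀ ≥ 0
  have hjlt : β j.castSucc < β j.succ := hβ (Fin.castSucc_lt_succ : j.castSucc < j.succ)
  have hj0 : (0:ℝ) ≤ β j.castSucc := by rw [← hβ0]; exact hβ.monotone (Fin.zero_le _)
  have hj1 : β j.castSucc < 1 := by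
    rw [← hβd]; exact lt_of_lt_of_le hjlt (hβ.monotone (Fin.le_last _))
  have hδ₀T : T (β j.castSucc) = δ₀ := by
    rw [hT j (β j.castSucc) ⟨le_refl _, hjlt⟩, hδ₀]
  have hδ₀0 : (0:ℝ) ≤ δ₀ := by
    rw [← hδ₀T]; exact (hmap ⟨hj0, hj1⟩).1
  -- δ₁ ≤ 1
  have hδ₁1 : δ₁ ≤ 1 := by
    by_contra h1
    push_neg at h1
    have hklt : β k.castSucc < β k.succ := hβ (Fin.castSucc_lt_succ : k.castSucc < k.succ)
    set y := max (β k.castSucc) (1 - γ k) with hy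
    have hy1 : y < β k.succ := max_lt hklt (by rw [hδ₁] at h1; linarith)
    have hy0 : (0:ℝ) ≤ y := le_trans (by rw [← hβ0]; exact hβ.monotone (Fin.zero_le _)) (le_max_left _ _)
    have hy1' : y < 1 := lt_of_lt_of_le hy1 (by rw [← hβd]; exact hβ.monotone (Fin.le_last _))
    have hTy : T y = y + γ k := hT k y ⟨le_max_left _ _, hy1⟩
    have := (hmap ⟨hy0, hy1'⟩).2
    rw [hTy] at this
    have : (1:ℝ) ≤ y + γ k := by
      have := le_max_right (β k.castSucc) (1 - γ k); linarith [this]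
    linarith [(hmap ⟨hy0, hy1'⟩).2, hTy]
  have hx0 : (0:ℝ) ≤ x := le_trans hδ₀0 hxl
  have hx1 : x < 1 := lt_of_lt_of_le hxr hδ₁1
  -- find the interval containing x
  have hS : (Finset.univ.filter (fun i : Fin d => β i.castSucc ≤ x)).Nonempty := by
    refine ⟨⟨0, hd⟩, Finset.mem_filter.mpr ⟨Finset.mem_univ _, ?_⟩⟩
    show β (Fin.castSucc _) ≤ x
    have : (⟨0, hd⟩ : Fin d).castSucc = 0 := rfl
    rw [this, hβ0]; exact hx0
  set i := (Finset.univ.filter (fun i : Fin d => β i.castSucc ≤ x)).max' hS with hi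
  have hil : β i.castSucc ≤ x :=
    (Finset.mem_filter.mp ((Finset.univ.filter _).max'_mem hS)).2
  have hir : x < β i.succ := by
    by_contra hc
    push_neg at hc
    rcases eq_or_lt_of_le (Fin.le_last i.succ) with hlast | hlast
    · rw [hlast, hβd] at hc; linarith
    · -- i.succ < last, so i.succ = (i+1).castSucc for some i+1 : Fin d
      have hlt : (i : ℕ) + 1 < d := by
        have := hlast
        simp [Fin.lt_iff_val_lt_val, Fin.last] at this
        omega
      have hmem : (⟨(i:ℕ)+1, hlt⟩ : Fin d) ∈ Finset.univ.filter (fun i : Fin d => β i.castSucc ≤ x) := by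
        refine Finset.mem_filter.mpr ⟨Finset.mem_univ _, ?_⟩
        have : (⟨(i:ℕ)+1, hlt⟩ : Fin d).castSucc = i.succ := by
          ext; simp
        rw [this]; exact hc
      have hle := (Finset.univ.filter (fun i : Fin d => β i.castSucc ≤ x)).le_max' _ hmem
      rw [← hi] at hle
      have : (i:ℕ) + 1 ≤ (i:ℕ) := hle
      omega
  have hTx : T x = x + γ i := hT i x ⟨hil, hir⟩
  rw [hTx]
  rcases lt_or_gt_of_ne (hγ i) with hneg | hpos
  · exact ⟨le_trans (hδ₀min i hneg) (by linarith), by linarith⟩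
  · exact ⟨by linarith, lt_of_lt_of_le (by linarith) (hδ₁max i hpos)⟩
end

section
/- With the notation of the previous statement (T an ITM of d intervals with γ₁ > 0, γ_d < 0, Δ₁ ∩ T(Ω) ≠ ∅, Δ_d ∩ T(Ω) ≠ ∅, Δ = [δ₀, δ₁)), the interval Δ is T-regular: there exists N such that for every x ∈ [0,1) there is 1 ≤ n < N with Tⁿ(x) ∈ Δ. -/
/-- For an ITM of `d` intervals in the irreducible case, the interval
`Δ = [δ₀, δ₁)` is `T`-regular: there is `N` such that every point of `[0,1)`
enters `Δ` within fewer than `N` iterates of `T`. -/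
theorem fitting_regular
    (d : ℕ) (hd : 0 < d) (β : Fin (d + 1) → ℝ) (γ : Fin d → ℝ) (T : ℝ → ℝ)
    (hβ : StrictMono β) (hβ0 : β 0 = 0) (hβd : β (Fin.last d) = 1)
    (hγ : ∀ i, γ i ≠ 0)
    (hT : ∀ i : Fin d, ∀ x ∈ Set.Ico (β i.castSucc) (β i.succ), T x = x + γ i)
    (hmap : Set.MapsTo T (Set.Ico 0 1) (Set.Ico 0 1))
    (hγ₁ : 0 < γ ⟨0, hd⟩) (hγd : γ ⟨d - 1, Nat.sub_lt hd one_pos⟩ < 0)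
    (hΔ₁ : (Set.Ico (β (⟨0, hd⟩ : Fin d).castSucc) (β (⟨0, hd⟩ : Fin d).succ) ∩
      T '' Set.Ico 0 1).Nonempty)
    (hΔd : (Set.Ico (β (⟨d - 1, Nat.sub_lt hd one_pos⟩ : Fin d).castSucc)
      (β (⟨d - 1, Nat.sub_lt hd one_pos⟩ : Fin d).succ) ∩ T '' Set.Ico 0 1).Nonempty)
    (δ₀ δ₁ : ℝ)
    (j : Fin d) (hj : γ j < 0) (hδ₀ : δ₀ = β j.castSucc + γ j)
    (hδ₀min : ∀ i, γ i < 0 → δ₀ ≤ β i.castSucc + γ i)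
    (k : Fin d) (hk : 0 < γ k) (hδ₁ : δ₁ = β k.succ + γ k)
    (hδ₁max : ∀ i, 0 < γ i → β i.succ + γ i ≤ δ₁)
    : ∃ N : ℕ, ∀ x ∈ Set.Ico (0:ℝ) 1, ∃ n : ℕ, 1 ≤ n ∧ n < N ∧
      T^[n] x ∈ Set.Ico δ₀ δ₁ := by
  classical
  have hne : (Finset.univ : Finset (Fin d)).Nonempty := ⟨⟨0, hd⟩, Finset.mem_univ _⟩
  set ε : ℝ := Finset.univ.inf' hne (fun i => |γ i|) with hεdef
  have hεpos : 0 < ε := by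
    rw [hεdef, Finset.lt_inf'_iff]
    intro i _
    exact abs_pos.mpr (hγ i)
  have hεle : ∀ i, ε ≤ |γ i| := fun i => Finset.inf'_le _ (Finset.mem_univ i)
  have hiter : ∀ y ∈ Set.Ico (0:ℝ) 1, ∀ m : ℕ, T^[m] y ∈ Set.Ico (0:ℝ) 1 :=
    fun y hy m => hmap.iterate m hy
  -- every point of [0,1) lies in some branch interval
  have branch : ∀ y ∈ Set.Ico (0:ℝ) 1, ∃ i : Fin d,
      β i.castSucc ≤ y ∧ y < β i.succ := by
    intro y hy
    set S : Finset (Fin d) := Finset.univ.filter (fun i => β i.castSucc ≤ y) with hS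
    have h0S : (⟨0, hd⟩ : Fin d) ∈ S := by
      simp only [hS, Finset.mem_filter, Finset.mem_univ, true_and]
      have h0 : (⟨0, hd⟩ : Fin d).castSucc = 0 := rfl
      rw [h0, hβ0]; exact hy.1
    have hSne : S.Nonempty := ⟨_, h0S⟩
    set i := S.max' hSne with hi
    have hiS : i ∈ S := S.max'_mem hSne
    have hle : β i.castSucc ≤ y := by
      simpa [hS] using hiS
    refine ⟨i, hle, ?_⟩
    by_contra hcon
    push_neg at hcon
    by_cases hlast : (i : ℕ) + 1 = d
    · have hsucc : i.succ = Fin.last d := by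
        apply Fin.ext; simpa using hlast
      rw [hsucc, hβd] at hcon
      exact absurd hy.2 (not_lt.mpr hcon)
    · have hlt : (i : ℕ) + 1 < d := lt_of_le_of_ne (Nat.succ_le_of_lt i.isLt) hlast
      set i' : Fin d := ⟨(i : ℕ) + 1, hlt⟩ with hi'
      have hcast : i'.castSucc = i.succ := rfl
      have hi'S : i' ∈ S := by
        simp only [hS, Finset.mem_filter, Finset.mem_univ, true_and]
        rw [hcast]; exact hcon
      have hle' := S.le_max' i' hi'S
      rw [← hi] at hle'
      have : (i : ℕ) + 1 ≤ (i : ℕ) := hle'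
      omega
  -- step lemma below δ₀ : increase by ε, land below δ₁
  have stepA : ∀ y ∈ Set.Ico (0:ℝ) 1, y < δ₀ → y + ε ≤ T y ∧ T y < δ₁ := by
    intro y hy hylt
    obtain ⟨i, hi1, hi2⟩ := branch y hy
    have hTy : T y = y + γ i := hT i y ⟨hi1, hi2⟩
    rcases (hγ i).lt_or_gt with hneg | hpos
    · exfalso
      have := hδ₀min i hneg
      linarith
    · have hεγ : ε ≤ γ i := le_trans (hεle i) (le_of_eq (abs_of_pos hpos))
      have := hδ₁max i hpos
      constructor
      · rw [hTy]; linarith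
      · rw [hTy]; linarith
  -- step lemma at/above δ₁ : decrease by ε, land at/above δ₀
  have stepB : ∀ y ∈ Set.Ico (0:ℝ) 1, δ₁ ≤ y → T y ≤ y - ε ∧ δ₀ ≤ T y := by
    intro y hy hyge
    obtain ⟨i, hi1, hi2⟩ := branch y hy
    have hTy : T y = y + γ i := hT i y ⟨hi1, hi2⟩
    rcases (hγ i).lt_or_gt with hneg | hpos
    · have hεγ : ε ≤ -γ i := le_trans (hεle i) (le_of_eq (abs_of_neg hneg))
      have := hδ₀min i hneg
      constructor
      · rw [hTy]; linarith
      · rw [hTy]; linarith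
    · exfalso
      have := hδ₁max i hpos
      linarith
  have hceil : (1 : ℝ) ≤ (⌈1/ε⌉₊ : ℝ) * ε := by
    have h1 : (1:ℝ)/ε ≤ (⌈1/ε⌉₊ : ℝ) := Nat.le_ceil _
    have h2 : ((1:ℝ)/ε) * ε = 1 := div_mul_cancel₀ 1 (ne_of_gt hεpos)
    nlinarith
  -- climbing case
  have up : ∀ y ∈ Set.Ico (0:ℝ) 1, y < δ₀ →
      ∃ m : ℕ, m ≤ ⌈1/ε⌉₊ ∧ T^[m] y ∈ Set.Ico δ₀ δ₁ := by
    intro y hy hylt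
    have grow : ∀ m : ℕ, (∀ k < m, T^[k] y < δ₀) → y + m * ε ≤ T^[m] y := by
      intro m
      induction m with
      | zero => intro _; simp
      | succ m ih =>
        intro hkm
        have h1 := ih (fun k hk => hkm k (Nat.lt_succ_of_lt hk))
        have h2 : T^[m] y < δ₀ := hkm m (Nat.lt_succ_self m)
        have h3 := stepA _ (hiter y hy m) h2
        rw [Function.iterate_succ_apply']
        push_cast
        linarith [h3.1]
    have hP : ∃ n : ℕ, δ₀ ≤ T^[n] y := by
      by_contra hcon
      push_neg at hcon
      have hg := grow (⌈1/ε⌉₊) (fun k _ => hcon k)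
      have hmem := hiter y hy (⌈1/ε⌉₊)
      have := hmem.2
      linarith [hy.1]
    set m := Nat.find hP with hm
    have hspec : δ₀ ≤ T^[m] y := Nat.find_spec hP
    have hm0 : m ≠ 0 := by
      intro h0
      rw [h0] at hspec
      simp only [Function.iterate_zero_apply] at hspec
      linarith
    have hprevlt : m - 1 < m := by omega
    have hprev : T^[m - 1] y < δ₀ := lt_of_not_ge (Nat.find_min hP hprevlt)
    have hstep := stepA _ (hiter y hy (m - 1)) hprev
    have hrw : T^[m] y = T (T^[m - 1] y) := by
      conv_lhs => rw [show m = (m - 1) + 1 by omega]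
      rw [Function.iterate_succ_apply']
    have hmle : m ≤ ⌈1/ε⌉₊ := by
      by_contra hcon
      push_neg at hcon
      have hall : ∀ k < m, T^[k] y < δ₀ := fun k hk => lt_of_not_ge (Nat.find_min hP hk)
      have hg := grow m hall
      have hmem := hiter y hy m
      have hmε : (⌈1/ε⌉₊ : ℝ) * ε ≤ (m : ℝ) * ε := by
        apply mul_le_mul_of_nonneg_right _ (le_of_lt hεpos)
        exact_mod_cast le_of_lt hcon
      have := hmem.2
      linarith [hy.1]
    exact ⟨m, hmle, hspec, by rw [hrw]; exact hstep.2⟩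
  -- descending case
  have down : ∀ y ∈ Set.Ico (0:ℝ) 1, δ₁ ≤ y →
      ∃ m : ℕ, m ≤ ⌈1/ε⌉₊ ∧ T^[m] y ∈ Set.Ico δ₀ δ₁ := by
    intro y hy hyge
    have fall : ∀ m : ℕ, (∀ k < m, δ₁ ≤ T^[k] y) → T^[m] y ≤ y - m * ε := by
      intro m
      induction m with
      | zero => intro _; simp
      | succ m ih =>
        intro hkm
        have h1 := ih (fun k hk => hkm k (Nat.lt_succ_of_lt hk))
        have h2 : δ₁ ≤ T^[m] y := hkm m (Nat.lt_succ_self m)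
        have h3 := stepB _ (hiter y hy m) h2
        rw [Function.iterate_succ_apply']
        push_cast
        linarith [h3.1]
    have hP : ∃ n : ℕ, T^[n] y < δ₁ := by
      by_contra hcon
      push_neg at hcon
      have hg := fall (⌈1/ε⌉₊) (fun k _ => hcon k)
      have hmem := hiter y hy (⌈1/ε⌉₊)
      have := hmem.1
      linarith [hy.2]
    set m := Nat.find hP with hm
    have hspec : T^[m] y < δ₁ := Nat.find_spec hP
    have hm0 : m ≠ 0 := by
      intro h0
      rw [h0] at hspec
      simp only [Function.iterate_zero_apply] at hspec
      linarith
    have hprevlt : m - 1 < m := by omega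
    have hprev : δ₁ ≤ T^[m - 1] y := le_of_not_gt (Nat.find_min hP hprevlt)
    have hstep := stepB _ (hiter y hy (m - 1)) hprev
    have hrw : T^[m] y = T (T^[m - 1] y) := by
      conv_lhs => rw [show m = (m - 1) + 1 by omega]
      rw [Function.iterate_succ_apply']
    have hmle : m ≤ ⌈1/ε⌉₊ := by
      by_contra hcon
      push_neg at hcon
      have hall : ∀ k < m, δ₁ ≤ T^[k] y := fun k hk => le_of_not_gt (Nat.find_min hP hk)
      have hg := fall m hall
      have hmem := hiter y hy m
      have hmε : (⌈1/ε⌉₊ : ℝ) * ε ≤ (m : ℝ) * ε := by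
        apply mul_le_mul_of_nonneg_right _ (le_of_lt hεpos)
        exact_mod_cast le_of_lt hcon
      have := hmem.1
      linarith [hy.2]
    exact ⟨m, hmle, by rw [hrw]; exact hstep.2, hspec⟩
  refine ⟨⌈1/ε⌉₊ + 2, ?_⟩
  intro x hx
  have hy : T x ∈ Set.Ico (0:ℝ) 1 := hmap hx
  rcases lt_or_ge (T x) δ₀ with h1 | h1
  · obtain ⟨m, hmle, hmem⟩ := up (T x) hy h1
    refine ⟨m + 1, by omega, by omega, ?_⟩
    rw [Function.iterate_succ_apply]
    exact hmem
  · rcases lt_or_ge (T x) δ₁ with h2 | h2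
    · exact ⟨1, le_refl 1, by omega, by simpa using ⟨h1, h2⟩⟩
    · obtain ⟨m, hmle, hmem⟩ := down (T x) hy h2
      refine ⟨m + 1, by omega, by omega, ?_⟩
      rw [Function.iterate_succ_apply]
      exact hmem
end

section
/- Let T be an ITM and suppose the restriction of T to its limit set X is transitive, where X is the closure of the intersection of the forward images Ω_n = Tⁿ(Ω). If there exists a T-regular interval Δ such that the first-return map T_Δ is of finite type, then T is of finite type. -/
/-- If `T|X` is transitive and there is a `T`-regular interval `Δ` whose
first-return map `T_Δ` is of finite type, then `T` is of finite type. -/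
theorem finite_type_of_induced_finite_type
    (d : ℕ) (hd : 0 < d) (β : Fin (d + 1) → ℝ) (γ : Fin d → ℝ) (T : ℝ → ℝ)
    (hβ : StrictMono β) (hβ0 : β 0 = 0) (hβd : β (Fin.last d) = 1)
    (hT : ∀ i : Fin d, ∀ x ∈ Set.Ico (β i.castSucc) (β i.succ), T x = x + γ i)
    (hmap : Set.MapsTo T (Set.Ico 0 1) (Set.Ico 0 1))
    -- the limit set `X`: closure of the intersection of the forward images
    (X : Set ℝ)
    (hX : X = closure (⋂ n : ℕ, T^[n + 1] '' Set.Ico 0 1))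
    -- `T|X` is transitive: some point of `X` has dense forward orbit in `X`
    (htrans : ∃ x ∈ X, X ⊆ closure {y : ℝ | ∃ n : ℕ, T^[n] x = y})
    -- a `T`-regular interval `Δ = [a, b)`
    (a b : ℝ) (hab : a < b) (hΔ : Set.Ico a b ⊆ Set.Ico 0 1)
    (N : ℕ)
    (hreg : ∀ x ∈ Set.Ico (0:ℝ) 1, ∃ n : ℕ, 1 ≤ n ∧ n < N ∧ T^[n] x ∈ Set.Ico a b)
    -- the first-return map `T_Δ`
    (TΔ : ℝ → ℝ)
    (hTΔ : ∀ x ∈ Set.Ico a b, ∃ n : ℕ, 1 ≤ n ∧ T^[n] x ∈ Set.Ico a b ∧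
      TΔ x = T^[n] x ∧ ∀ m : ℕ, 1 ≤ m → m < n → T^[m] x ∉ Set.Ico a b)
    -- `T_Δ` is of finite type
    (hfin : ∃ n : ℕ, TΔ^[n + 1] '' Set.Ico a b = TΔ^[n] '' Set.Ico a b) :
    -- then `T` is of finite type
    ∃ n : ℕ, T^[n + 1] '' Set.Ico (0:ℝ) 1 = T^[n] '' Set.Ico (0:ℝ) 1 := by
  obtain ⟨n₀, hn₀⟩ := hfin
  -- return time is at least 1 and less than N
  have hret : ∀ z ∈ Set.Ico a b, ∃ τ : ℕ, 1 ≤ τ ∧ τ < N ∧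
      T^[τ] z ∈ Set.Ico a b ∧ TΔ z = T^[τ] z := by
    intro z hz
    obtain ⟨τ, hτ1, hτΔ, hTz, hmin⟩ := hTΔ z hz
    obtain ⟨n', hn'1, hn'N, hn'Δ⟩ := hreg z (hΔ hz)
    have hτn' : τ ≤ n' := by
      by_contra h
      exact hmin n' hn'1 (lt_of_not_ge h) hn'Δ
    exact ⟨τ, hτ1, lt_of_le_of_lt hτn' hn'N, hτΔ, hTz⟩
  -- Lemma A: iterates of TΔ on Δ stay in Δ and represent long T-iterates
  have lemA : ∀ k : ℕ, ∀ z ∈ Set.Ico a b,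
      TΔ^[k] z ∈ Set.Ico a b ∧ ∃ s : ℕ, k ≤ s ∧ TΔ^[k] z = T^[s] z := by
    intro k
    induction k with
    | zero => intro z hz; exact ⟨hz, 0, le_refl 0, rfl⟩
    | succ k ih =>
      intro z hz
      obtain ⟨hmem, s, hks, hs⟩ := ih z hz
      obtain ⟨τ, hτ1, _, hτΔ, hTz⟩ := hret _ hmem
      rw [Function.iterate_succ_apply']
      refine ⟨by rw [hTz]; exact hτΔ, τ + s, by omega, ?_⟩
      rw [hTz, hs, ← Function.iterate_add_apply]
  -- Lemma B: orbit decomposition through returns to Δ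
  have lemB : ∀ r : ℕ, ∀ z ∈ Set.Ico a b,
      ∃ k s r' : ℕ, s + r' = r ∧ r' < N ∧ s ≤ k * N ∧
        TΔ^[k] z ∈ Set.Ico a b ∧ TΔ^[k] z = T^[s] z := by
    intro r
    induction r using Nat.strong_induction_on with
    | _ r ih =>
      intro z hz
      obtain ⟨τ, hτ1, hτN, hτΔ, hTz⟩ := hret z hz
      by_cases hr : r < τ
      · exact ⟨0, 0, r, by omega, lt_trans hr hτN, by omega, hz, rfl⟩
      · push_neg at hr
        obtain ⟨k₁, s₁, r', hsum, hr'N, hsN, hmem, heq⟩ :=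
          ih (r - τ) (by omega) (T^[τ] z) hτΔ
        refine ⟨k₁ + 1, s₁ + τ, r', by omega, hr'N, by nlinarith, ?_, ?_⟩
        · rw [Function.iterate_succ_apply, hTz]; exact hmem
        · rw [Function.iterate_succ_apply, hTz, heq, ← Function.iterate_add_apply]
  -- stabilization of TΔ images
  have hstab : ∀ u : ℕ, TΔ^[n₀ + u] '' Set.Ico a b = TΔ^[n₀] '' Set.Ico a b := by
    intro u
    induction u with
    | zero => rfl
    | succ u ih =>
      have : n₀ + (u + 1) = (n₀ + u) + 1 := by omega
      rw [this, Function.iterate_succ', Set.image_comp, ih, ← Set.image_comp,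
        ← Function.iterate_succ', hn₀]
  -- monotonicity: the forward images are decreasing
  have hmono : ∀ j : ℕ, T^[j + 1] '' Set.Ico (0:ℝ) 1 ⊆ T^[j] '' Set.Ico (0:ℝ) 1 := by
    intro j y hy
    obtain ⟨x, hx, hxy⟩ := hy
    exact ⟨T x, hmap hx, by rw [← hxy, Function.iterate_succ_apply]⟩
  have hanti : ∀ i j : ℕ, i ≤ j →
      T^[j] '' Set.Ico (0:ℝ) 1 ⊆ T^[i] '' Set.Ico (0:ℝ) 1 := by
    intro i j hij
    induction j with
    | zero => simp_all
    | succ j ihj =>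
      rcases Nat.lt_or_ge i (j + 1) with h | h
      · exact (hmono j).trans (ihj (by omega))
      · have : i = j + 1 := by omega
        rw [this]
  obtain ⟨P, hP⟩ : ∃ P : ℕ, N * n₀ = P := ⟨_, rfl⟩
  obtain ⟨m, hm⟩ : ∃ m : ℕ, m = P + N + N := ⟨_, rfl⟩
  refine ⟨m, Set.Subset.antisymm (hmono m) ?_⟩
  rintro y ⟨x, hx, rfl⟩
  obtain ⟨t, ht1, htN, htΔ⟩ := hreg x hx
  have htm : t ≤ m := by omega
  obtain ⟨k, s, r', hsum, hr'N, hsN, hmem, heq⟩ := lemB (m - t) (T^[t] x) htΔ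
  -- k ≥ n₀
  have hk : n₀ ≤ k := by
    by_contra h
    push_neg at h
    have h2 : k * N + N ≤ P := by
      calc k * N + N = (k + 1) * N := by ring
        _ ≤ n₀ * N := Nat.mul_le_mul_right N h
        _ = N * n₀ := Nat.mul_comm _ _
        _ = P := hP
    have h4 : s + N ≤ P := le_trans (Nat.add_le_add_right hsN N) h2
    omega
  -- use stabilization to lengthen the backward orbit
  have hw : TΔ^[k] (T^[t] x) ∈ TΔ^[n₀ + (m + 1)] '' Set.Ico a b := by
    rw [hstab (m + 1), ← hstab (k - n₀)]
    have : n₀ + (k - n₀) = k := by omega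
    rw [this]
    exact ⟨T^[t] x, htΔ, rfl⟩
  obtain ⟨z', hz', hz'eq⟩ := hw
  obtain ⟨_, s', hs'le, hs'⟩ := lemA (n₀ + (m + 1)) z' hz'
  -- assemble: T^[m] x = T^[r' + s'] z'
  have key : T^[m] x = T^[r' + s'] z' := by
    have h1 : T^[m] x = T^[m - t] (T^[t] x) := by
      rw [← Function.iterate_add_apply]
      congr 1; omega
    have hrs : r' + s = m - t := by omega
    have h2 : T^[m - t] (T^[t] x) = T^[r'] (T^[s] (T^[t] x)) := by
      rw [← hrs, Function.iterate_add_apply]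
    rw [h1, h2, ← heq, ← hz'eq, hs', ← Function.iterate_add_apply]
  rw [key]
  have hms : m + 1 ≤ s' := by omega
  exact hanti (m + 1) (r' + s') (le_trans hms (Nat.le_add_left s' r'))
    ⟨z', hΔ hz', rfl⟩
end

section
/- Let T be a tight ITM of three intervals with γ₁ > 0, γ₂ < 0, γ₃ < 0, where T(Δ₁) is rightmost (β₁ + γ₁ = 1), T(Δ₃) is leftmost (β₂ + γ₃ = 0), and |Δ₁| ≥ |Δ₃| (i.e. β₁ ≥ 1 - β₂). Then Δ = Δ₁ ∪ Δ₂ = [0, β₂) is T-regular with return time at most 2: every point of Δ₂ and of Δ₁' = [0, β₂ - γ₁) returns to Δ after one iterate, and every point of Δ₁'' = [β₂ - γ₁, β₁) returns after two iterates via T(Δ₁'') = Δ₃ and T(Δ₃) ⊆ Δ₁. -/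
/-- Case B: for a tight ITM of three intervals with `γ₁ > 0`, `γ₂ < 0`,
`γ₃ < 0`, `β₁ + γ₁ = 1`, `β₂ + γ₃ = 0`, `β₁ ≥ 1 - β₂`, the interval
`Δ = Δ₁ ∪ Δ₂ = [0, β₂)` is regular with return time at most 2. -/
theorem caseB_regular_return_two
    (β₁ β₂ γ₁ γ₂ γ₃ : ℝ) (T : ℝ → ℝ)
    (h0 : 0 < β₁) (h1 : β₁ < β₂) (h2 : β₂ < 1)
    (hT1 : ∀ x ∈ Set.Ico (0:ℝ) β₁, T x = x + γ₁)
    (hT2 : ∀ x ∈ Set.Ico β₁ β₂, T x = x + γ₂)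
    (hT3 : ∀ x ∈ Set.Ico β₂ (1:ℝ), T x = x + γ₃)
    (hmap : Set.MapsTo T (Set.Ico 0 1) (Set.Ico 0 1))
    (hγ₁ : 0 < γ₁) (hγ₂ : γ₂ < 0) (hγ₃ : γ₃ < 0)
    (hright : β₁ + γ₁ = 1) (hleft : β₂ + γ₃ = 0) (hlen : β₁ ≥ 1 - β₂) :
    -- points of Δ₂ return in one step
    (∀ x ∈ Set.Ico β₁ β₂, T x ∈ Set.Ico (0:ℝ) β₂) ∧
    -- points of Δ₁' = [0, β₂ - γ₁) return in one step
    (∀ x ∈ Set.Ico (0:ℝ) (β₂ - γ₁), T x ∈ Set.Ico (0:ℝ) β₂) ∧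
    -- T(Δ₁'') = Δ₃ and T(Δ₃) ⊆ Δ₁, so Δ₁'' returns in two steps
    T '' Set.Ico (β₂ - γ₁) β₁ = Set.Ico β₂ 1 ∧
    T '' Set.Ico β₂ 1 ⊆ Set.Ico 0 β₁ ∧
    (∀ x ∈ Set.Ico (β₂ - γ₁) β₁, T^[2] x ∈ Set.Ico (0:ℝ) β₂) ∧
    -- every point of [0,1) enters Δ within two iterates
    (∀ x ∈ Set.Ico (0:ℝ) 1, T x ∈ Set.Ico (0:ℝ) β₂ ∨ T^[2] x ∈ Set.Ico (0:ℝ) β₂) := by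
  have hγ₃' : γ₃ = -β₂ := by linarith
  -- Δ₂ returns in one step
  have H2 : ∀ x ∈ Set.Ico β₁ β₂, T x ∈ Set.Ico (0:ℝ) β₂ := by
    intro x hx
    obtain ⟨hx0, hx1⟩ := hx
    have hTx := hT2 x ⟨hx0, hx1⟩
    have hx01 : x ∈ Set.Ico (0:ℝ) 1 := ⟨by linarith, by linarith⟩
    have hm := hmap hx01
    exact ⟨hm.1, by rw [hTx]; linarith⟩
  -- Δ₁' returns in one step
  have H1' : ∀ x ∈ Set.Ico (0:ℝ) (β₂ - γ₁), T x ∈ Set.Ico (0:ℝ) β₂ := by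
    intro x hx
    obtain ⟨hx0, hx1⟩ := hx
    have hxβ₁ : x < β₁ := by linarith
    have hTx := hT1 x ⟨hx0, hxβ₁⟩
    rw [hTx]
    exact ⟨by linarith, by linarith⟩
  -- T on Δ₃ lands in Δ₁
  have H3 : ∀ x ∈ Set.Ico β₂ (1:ℝ), T x ∈ Set.Ico 0 β₁ := by
    intro x hx
    obtain ⟨hx0, hx1⟩ := hx
    have hTx := hT3 x ⟨hx0, hx1⟩
    rw [hTx, hγ₃']
    exact ⟨by linarith, by linarith⟩
  -- T on Δ₁'' lands in Δ₃
  have H1'' : ∀ x ∈ Set.Ico (β₂ - γ₁) β₁, T x ∈ Set.Ico β₂ (1:ℝ) := by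
    intro x hx
    obtain ⟨hx0, hx1⟩ := hx
    have hx00 : (0:ℝ) ≤ x := by linarith
    have hTx := hT1 x ⟨hx00, hx1⟩
    rw [hTx]
    exact ⟨by linarith, by linarith⟩
  have Himg : T '' Set.Ico (β₂ - γ₁) β₁ = Set.Ico β₂ 1 := by
    apply Set.Subset.antisymm
    · rintro y ⟨x, hx, rfl⟩
      exact H1'' x hx
    · rintro y ⟨hy0, hy1⟩
      refine ⟨y - γ₁, ⟨by linarith, by linarith⟩, ?_⟩
      have := hT1 (y - γ₁) ⟨by linarith, by linarith⟩
      rw [this]; ring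
  have H2step : ∀ x ∈ Set.Ico (β₂ - γ₁) β₁, T^[2] x ∈ Set.Ico (0:ℝ) β₂ := by
    intro x hx
    have h3 := H1'' x hx
    have h1 := H3 _ h3
    rw [Function.iterate_succ_apply', Function.iterate_one]
    exact ⟨h1.1, by linarith [h1.2]⟩
  refine ⟨H2, H1', Himg, ?_, H2step, ?_⟩
  · rintro y ⟨x, hx, rfl⟩
    exact H3 x hx
  · intro x hx
    obtain ⟨hx0, hx1⟩ := hx
    rcases lt_or_ge x (β₂ - γ₁) with h | h
    · exact Or.inl (H1' x ⟨hx0, h⟩)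
    · rcases lt_or_ge x β₁ with h' | h'
      · exact Or.inr (H2step x ⟨h, h'⟩)
      · rcases lt_or_ge x β₂ with h'' | h''
        · exact Or.inl (H2 x ⟨h', h''⟩)
        · -- x ∈ Δ₃, T x ∈ Δ₁ ⊆ Δ, return in one step
          have h3 := H3 x ⟨h'', hx1⟩
          exact Or.inl ⟨h3.1, by linarith [h3.2]⟩
end

section
/- Let T be a tight ITM of three intervals with γ₁ > 0, γ₂ > 0, γ₃ < 0, β₁ + γ₁ = 1 (Δ₁ goes rightmost), β₂ + γ₃ = 0 (Δ₃ goes leftmost), and β₁ ≥ 1 - β₂. Then T(Δ₂) ⊆ Δ := Δ₂ ∪ Δ₃ = [β₁, 1), and T(Δ₃) ⊆ Δ₁; moreover, as long as iterates of T(Δ₃) stay inside Δ₁, they are translated by γ₁ each step: if T²(Δ₃), ..., Tⁿ(Δ₃) ⊆ Δ₁ then Tⁿ(Δ₃) = T(Δ₃) + (n-1)γ₁. -/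
/-- Case C setup: for a tight ITM of three intervals with `γ₁, γ₂ > 0 > γ₃`,
`β₁ + γ₁ = 1`, `β₂ + γ₃ = 0`, `β₁ ≥ 1 - β₂`: `T(Δ₂) ⊆ Δ = [β₁, 1)`,
`T(Δ₃) ⊆ Δ₁`, and while iterates of `T(Δ₃)` stay in `Δ₁` they are translated
by `γ₁` each step. -/
theorem caseC_iterates
    (β₁ β₂ γ₁ γ₂ γ₃ : ℝ) (T : ℝ → ℝ)
    (h0 : 0 < β₁) (h1 : β₁ < β₂) (h2 : β₂ < 1)
    (hT1 : ∀ x ∈ Set.Ico (0:ℝ) β₁, T x = x + γ₁)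
    (hT2 : ∀ x ∈ Set.Ico β₁ β₂, T x = x + γ₂)
    (hT3 : ∀ x ∈ Set.Ico β₂ (1:ℝ), T x = x + γ₃)
    (hmap : Set.MapsTo T (Set.Ico 0 1) (Set.Ico 0 1))
    (hγ₁ : 0 < γ₁) (hγ₂ : 0 < γ₂) (hγ₃ : γ₃ < 0)
    (hright : β₁ + γ₁ = 1) (hleft : β₂ + γ₃ = 0) (hlen : β₁ ≥ 1 - β₂) :
    T '' Set.Ico β₁ β₂ ⊆ Set.Ico β₁ 1 ∧
    T '' Set.Ico β₂ 1 ⊆ Set.Ico 0 β₁ ∧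
    ∀ n : ℕ, 1 ≤ n →
      (∀ m : ℕ, 2 ≤ m → m ≤ n → T^[m] '' Set.Ico β₂ 1 ⊆ Set.Ico 0 β₁) →
      T^[n] '' Set.Ico β₂ 1 = (fun x => x + (n - 1 : ℕ) * γ₁) '' (T '' Set.Ico β₂ 1) := by
  have hpart2 : T '' Set.Ico β₂ 1 ⊆ Set.Ico 0 β₁ := by
    rintro y ⟨x, hx, rfl⟩
    rw [hT3 x hx]
    exact ⟨by linarith [hx.1], by linarith [hx.2]⟩
  refine ⟨?_, hpart2, ?_⟩
  · rintro y ⟨x, hx, rfl⟩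
    have hx01 : x ∈ Set.Ico (0:ℝ) 1 := ⟨by linarith [hx.1], by linarith [hx.2]⟩
    refine ⟨?_, (hmap hx01).2⟩
    rw [hT2 x hx]
    linarith [hx.1]
  · intro n hn hhyp
    induction n with
    | zero => omega
    | succ n ih =>
      rcases Nat.lt_or_ge n 1 with h | hn1
      · have : n = 0 := by omega
        subst this
        simp
      · have ihn := ih hn1 (fun m hm hmn => hhyp m hm (by omega))
        have hsub : T^[n] '' Set.Ico β₂ 1 ⊆ Set.Ico 0 β₁ := by
          rcases Nat.lt_or_ge n 2 with h1 | h1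
          · have : n = 1 := by omega
            subst this
            simpa using hpart2
          · exact hhyp n h1 (by omega)
        have step : T^[n+1] '' Set.Ico β₂ 1 = T '' (T^[n] '' Set.Ico β₂ 1) := by
          rw [Function.iterate_succ', Set.image_comp]
        rw [step, Set.image_congr (fun x hx => hT1 x (hsub hx)), ihn,
          Set.image_image]
        apply Set.image_congr
        intro x _
        have hc : ((n - 1 : ℕ) : ℝ) = (n : ℝ) - 1 := by
          rw [Nat.cast_sub hn1]; simp
        have hc2 : ((n + 1 - 1 : ℕ) : ℝ) = (n : ℝ) := by simp
        rw [hc, hc2]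
        ring
end

section
/- Let T be a tight ITM of three intervals with γ₁ > 0, γ₂ > 0, γ₃ < 0, β₁ + γ₁ = 1, β₂ + γ₃ = 0, β₁ ≥ 1 - β₂. Then the interval Δ = [β₁, 1) is T-regular: there exists N such that every point of [0,1) enters Δ within fewer than N iterates of T. -/
/-- From a point in `[0, β₁)`, iterating `T` (which adds `γ₁` there) reaches
`[β₁, 1)` within `m` steps, provided `y + m·γ₁ ≥ β₁`. -/
lemma caseC_climb (β₁ γ₁ : ℝ) (T : ℝ → ℝ) (hγ₁ : 0 < γ₁) (hright : β₁ + γ₁ = 1)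
    (hT1 : ∀ x ∈ Set.Ico (0:ℝ) β₁, T x = x + γ₁) :
    ∀ m : ℕ, ∀ y : ℝ, 0 ≤ y → y < β₁ → β₁ ≤ y + m * γ₁ →
      ∃ k : ℕ, 1 ≤ k ∧ k ≤ m ∧ T^[k] y ∈ Set.Ico β₁ 1 := by
  intro m
  induction m with
  | zero =>
    intro y hy0 hyβ hm
    simp at hm
    linarith
  | succ m ih =>
    intro y hy0 hyβ hm
    have hTy : T y = y + γ₁ := hT1 y ⟨hy0, hyβ⟩
    by_cases h : β₁ ≤ y + γ₁
    · refine ⟨1, le_refl 1, by omega, ?_⟩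
      simp [hTy]
      exact ⟨h, by linarith⟩
    · push_neg at h
      have h0' : 0 ≤ y + γ₁ := by linarith
      have hm' : β₁ ≤ (y + γ₁) + m * γ₁ := by
        push_cast at hm ⊢
        linarith
      obtain ⟨k, hk1, hkm, hk⟩ := ih (y + γ₁) h0' h hm'
      refine ⟨k + 1, by omega, by omega, ?_⟩
      rw [Function.iterate_add_apply, Function.iterate_one, hTy]
      exact hk

/-- Case C: the interval `Δ = [β₁, 1)` is `T`-regular. -/
theorem caseC_regular
    (β₁ β₂ γ₁ γ₂ γ₃ : ℝ) (T : ℝ → ℝ)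
    (h0 : 0 < β₁) (h1 : β₁ < β₂) (h2 : β₂ < 1)
    (hT1 : ∀ x ∈ Set.Ico (0:ℝ) β₁, T x = x + γ₁)
    (hT2 : ∀ x ∈ Set.Ico β₁ β₂, T x = x + γ₂)
    (hT3 : ∀ x ∈ Set.Ico β₂ (1:ℝ), T x = x + γ₃)
    (hmap : Set.MapsTo T (Set.Ico 0 1) (Set.Ico 0 1))
    (hγ₁ : 0 < γ₁) (hγ₂ : 0 < γ₂) (hγ₃ : γ₃ < 0)
    (hright : β₁ + γ₁ = 1) (hleft : β₂ + γ₃ = 0) (hlen : β₁ ≥ 1 - β₂) :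
    ∃ N : ℕ, ∀ x ∈ Set.Ico (0:ℝ) 1, ∃ n : ℕ, 1 ≤ n ∧ n < N ∧
      T^[n] x ∈ Set.Ico β₁ 1 := by
  obtain ⟨M, hM⟩ := Archimedean.arch β₁ hγ₁
  have hM' : β₁ ≤ (M : ℝ) * γ₁ := by simpa [nsmul_eq_mul] using hM
  refine ⟨M + 2, ?_⟩
  rintro x ⟨hx0, hx1⟩
  rcases lt_or_ge x β₁ with hc1 | hc1
  · -- x ∈ [0, β₁): climb
    obtain ⟨k, hk1, hkM, hk⟩ := caseC_climb β₁ γ₁ T hγ₁ hright hT1 M x hx0 hc1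
      (by linarith)
    exact ⟨k, hk1, by omega, hk⟩
  · rcases lt_or_ge x β₂ with hc2 | hc2
    · -- x ∈ [β₁, β₂): one step
      have hTx : T x = x + γ₂ := hT2 x ⟨hc1, hc2⟩
      have hlt : T x < 1 := (hmap ⟨hx0, hx1⟩).2
      refine ⟨1, le_refl 1, by omega, ?_⟩
      simp only [Function.iterate_one]
      exact ⟨by rw [hTx]; linarith, hlt⟩
    · -- x ∈ [β₂, 1): fall to [0, β₁), then climb
      have hTx : T x = x + γ₃ := hT3 x ⟨hc2, hx1⟩
      have h0' : 0 ≤ T x := by rw [hTx]; linarith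
      have hβ' : T x < β₁ := by rw [hTx]; linarith
      obtain ⟨k, hk1, hkM, hk⟩ := caseC_climb β₁ γ₁ T hγ₁ hright hT1 M (T x) h0' hβ'
        (by linarith)
      refine ⟨k + 1, by omega, by omega, ?_⟩
      rw [Function.iterate_add_apply, Function.iterate_one]
      exact hk
end

section
/- Let T be a tight ITM of three intervals with γ₁ > 0, γ₂ > 0, γ₃ < 0, β₁ + γ₁ = 1, β₂ + γ₃ = 0, β₁ ≥ 1 - β₂, and suppose there exists n ≥ 1 with T²(Δ₃), ..., Tⁿ(Δ₃) ⊆ Δ₁ and Tⁿ⁺¹(Δ₃) ⊆ Δ = [β₁, 1). Then the first-return map T_Δ is an ITM of two intervals on Δ (Δ₂ returning in one step with translation γ₂, Δ₃ returning in n+1 steps with translation γ₃ + n·γ₁). -/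
/-- Possibility B_n: if `T²(Δ₃), …, Tⁿ(Δ₃) ⊆ Δ₁` and `Tⁿ⁺¹(Δ₃) ⊆ Δ = [β₁,1)`,
then the first-return map `T_Δ` is an ITM of two intervals on `Δ`: it
translates `Δ₂` by `γ₂` (return in one step) and `Δ₃` by `γ₃ + n·γ₁`
(return in `n+1` steps). -/
theorem possibilityB_induced_two_itm
    (β₁ β₂ γ₁ γ₂ γ₃ : ℝ) (T : ℝ → ℝ)
    (h0 : 0 < β₁) (h1 : β₁ < β₂) (h2 : β₂ < 1)
    (hT1 : ∀ x ∈ Set.Ico (0:ℝ) β₁, T x = x + γ₁)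
    (hT2 : ∀ x ∈ Set.Ico β₁ β₂, T x = x + γ₂)
    (hT3 : ∀ x ∈ Set.Ico β₂ (1:ℝ), T x = x + γ₃)
    (hmap : Set.MapsTo T (Set.Ico 0 1) (Set.Ico 0 1))
    (hγ₁ : 0 < γ₁) (hγ₂ : 0 < γ₂) (hγ₃ : γ₃ < 0)
    (hright : β₁ + γ₁ = 1) (hleft : β₂ + γ₃ = 0) (hlen : β₁ ≥ 1 - β₂)
    (n : ℕ) (hn : 1 ≤ n)
    (hin : ∀ m : ℕ, 2 ≤ m → m ≤ n → T^[m] '' Set.Ico β₂ 1 ⊆ Set.Ico 0 β₁)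
    (hout : T^[n + 1] '' Set.Ico β₂ 1 ⊆ Set.Ico β₁ 1)
    -- the first-return map to Δ = [β₁, 1)
    (TΔ : ℝ → ℝ)
    (hTΔ : ∀ x ∈ Set.Ico β₁ (1:ℝ), ∃ m : ℕ, 1 ≤ m ∧ T^[m] x ∈ Set.Ico β₁ 1 ∧
      TΔ x = T^[m] x ∧ ∀ l : ℕ, 1 ≤ l → l < m → T^[l] x ∉ Set.Ico β₁ 1) :
    (∀ x ∈ Set.Ico β₁ β₂, TΔ x = x + γ₂) ∧
    (∀ x ∈ Set.Ico β₂ (1:ℝ), TΔ x = T^[n + 1] x ∧ TΔ x = x + (γ₃ + n * γ₁)) := by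

  constructor
  · intro x hx
    obtain ⟨m, hm1, hmem, heq, hmin⟩ := hTΔ x ⟨hx.1, hx.2.trans h2⟩
    have hTx : T x = x + γ₂ := hT2 x hx
    have hx01 : x ∈ Set.Ico (0:ℝ) 1 := ⟨h0.le.trans hx.1, hx.2.trans h2⟩
    have hTxΔ : T x ∈ Set.Ico β₁ 1 := ⟨by rw [hTx]; linarith [hx.1], (hmap hx01).2⟩
    have hm : m = 1 := by
      by_contra h
      exact hmin 1 le_rfl (by omega) (by simpa using hTxΔ)
    rw [heq, hm]
    simpa using hTx
  · intro x hx
    obtain ⟨k, rfl⟩ : ∃ k, n = k + 1 := ⟨n - 1, by omega⟩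
    have key : ∀ j : ℕ, j ≤ k →
        T^[j+1] x ∈ Set.Ico 0 β₁ ∧ T^[j+1] x = x + γ₃ + j * γ₁ := by
      intro j
      induction j with
      | zero =>
        intro _
        have hTx : T x = x + γ₃ := hT3 x hx
        have hmem : T x ∈ Set.Ico 0 β₁ :=
          ⟨by rw [hTx]; linarith [hx.1], by rw [hTx]; linarith [hx.2]⟩
        constructor
        · simpa using hmem
        · simp only [zero_add, Function.iterate_one, hTx]
          push_cast; ring
      | succ j ih =>
        intro hj
        obtain ⟨hmem, heq⟩ := ih (by omega)
        have hstep : T^[j+1+1] x = T^[j+1] x + γ₁ := by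
          rw [Function.iterate_succ_apply', hT1 _ hmem]
        have hmem2 : T^[j+1+1] x ∈ Set.Ico 0 β₁ :=
          hin (j+2) (by omega) (by omega) ⟨x, hx, rfl⟩
        exact ⟨hmem2, by rw [hstep, heq]; push_cast; ring⟩
    obtain ⟨hmemk, heqk⟩ := key k le_rfl
    have hfin : T^[k+1+1] x = x + (γ₃ + ((k:ℝ)+1) * γ₁) := by
      rw [Function.iterate_succ_apply', hT1 _ hmemk, heqk]; ring
    have houtx : T^[k+1+1] x ∈ Set.Ico β₁ 1 := hout ⟨x, hx, rfl⟩
    obtain ⟨m, hm1, hmem, heq, hmin⟩ := hTΔ x ⟨by linarith [hx.1], hx.2⟩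
    have hm : m = k + 2 := by
      rcases lt_trichotomy m (k+2) with h | h | h
      · exfalso
        obtain ⟨j, rfl⟩ : ∃ j, m = j + 1 := ⟨m - 1, by omega⟩
        have h1' := (key j (by omega)).1
        have := hmem.1
        have := h1'.2
        linarith
      · exact h
      · exact absurd houtx (hmin (k+2) (by omega) h)
    subst hm
    refine ⟨heq, ?_⟩
    rw [heq]
    show T^[k+1+1] x = _
    rw [hfin]
    push_cast; ring
end

section
/- Let T be a tight ITM of three intervals with γ₁ > 0, γ₂ > 0, γ₃ < 0, β₁ + γ₁ = 1, β₂ + γ₃ = 0, β₁ ≥ 1 - β₂, and suppose for some n ≥ 1: T²(Δ₃),...,Tⁿ(Δ₃) ⊆ Δ₁, Tⁿ⁺¹(Δ₃) ∩ [β₁,1) ≠ ∅ but Tⁿ⁺¹(Δ₃) ⊄ [β₁,1). Let Δ₃' = {x ∈ Δ₃ : Tⁿ⁺¹(x) < β₁} and Δ₃'' = {x ∈ Δ₃ : Tⁿ⁺¹(x) ≥ β₁}. Then Δ₃' and Δ₃'' are half-open intervals with Δ₃' to the left of Δ₃''; Δ₃'' returns to Δ = [β₁,1) after n+1 iterations landing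 at the leftmost position of Δ, and Δ₃' returns after n+2 iterations landing at the rightmost position of Δ. -/
/-- Possibility C_n: if `T²(Δ₃), …, Tⁿ(Δ₃) ⊆ Δ₁` while `Tⁿ⁺¹(Δ₃)` meets
`Δ = [β₁,1)` but is not contained in it, then `Δ₃` splits into two half-open
intervals `Δ₃'` (left) and `Δ₃''` (right); `Δ₃''` returns to `Δ` after `n+1`
iterations landing at the leftmost position, and `Δ₃'` returns after `n+2`
iterations landing at the rightmost position. -/
theorem possibilityC_split
    (β₁ β₂ γ₁ γ₂ γ₃ : ℝ) (T : ℝ → ℝ)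
    (h0 : 0 < β₁) (h1 : β₁ < β₂) (h2 : β₂ < 1)
    (hT1 : ∀ x ∈ Set.Ico (0:ℝ) β₁, T x = x + γ₁)
    (hT2 : ∀ x ∈ Set.Ico β₁ β₂, T x = x + γ₂)
    (hT3 : ∀ x ∈ Set.Ico β₂ (1:ℝ), T x = x + γ₃)
    (hmap : Set.MapsTo T (Set.Ico 0 1) (Set.Ico 0 1))
    (hγ₁ : 0 < γ₁) (hγ₂ : 0 < γ₂) (hγ₃ : γ₃ < 0)
    (hright : β₁ + γ₁ = 1) (hleft : β₂ + γ₃ = 0) (hlen : β₁ ≥ 1 - β₂)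
    (n : ℕ) (hn : 1 ≤ n)
    (hin : ∀ m : ℕ, 2 ≤ m → m ≤ n → T^[m] '' Set.Ico β₂ 1 ⊆ Set.Ico 0 β₁)
    (hmeet : ∃ x ∈ Set.Ico β₂ (1:ℝ), T^[n + 1] x ∈ Set.Ico β₁ 1)
    (hnotin : ∃ x ∈ Set.Ico β₂ (1:ℝ), T^[n + 1] x ∉ Set.Ico β₁ 1) :
    ∃ s : ℝ, β₂ < s ∧ s < 1 ∧
      {x ∈ Set.Ico β₂ (1:ℝ) | T^[n + 1] x < β₁} = Set.Ico β₂ s ∧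
      {x ∈ Set.Ico β₂ (1:ℝ) | β₁ ≤ T^[n + 1] x} = Set.Ico s 1 ∧
      T^[n + 1] '' Set.Ico s 1 ⊆ Set.Ico β₁ 1 ∧
      sInf (T^[n + 1] '' Set.Ico s 1) = β₁ ∧
      T^[n + 2] '' Set.Ico β₂ s ⊆ Set.Ico β₁ 1 ∧
      sSup (closure (T^[n + 2] '' Set.Ico β₂ s)) = 1 := by
  have hγ₃' : γ₃ = -β₂ := by linarith
  set c : ℝ := (n : ℝ) * γ₁ - β₂ with hc
  have hsub : Set.Ico β₂ (1:ℝ) ⊆ Set.Ico 0 1 := fun x hx => ⟨by linarith [hx.1], hx.2⟩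
  -- iterates stay in Δ₁ and are translations
  have key : ∀ x ∈ Set.Ico β₂ (1:ℝ), ∀ m : ℕ, m < n →
      T^[m+1] x = x - β₂ + (m : ℝ) * γ₁ ∧ T^[m+1] x ∈ Set.Ico (0:ℝ) β₁ := by
    intro x hx m
    induction m with
    | zero =>
      intro _
      have hTx : T x = x - β₂ := by rw [hT3 x hx, hγ₃']; ring
      have h1x : T^[1] x = x - β₂ := by simpa using hTx
      refine ⟨by rw [h1x]; push_cast; ring, ?_⟩
      rw [h1x]
      exact ⟨by linarith [hx.1], by linarith [hx.2]⟩
    | succ m ih =>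
      intro hlt
      obtain ⟨hf, hmem⟩ := ih (by omega)
      have hstep : T^[m+1+1] x = T^[m+1] x + γ₁ := by
        rw [Function.iterate_succ_apply']; exact hT1 _ hmem
      refine ⟨by rw [hstep, hf]; push_cast; ring, ?_⟩
      exact hin (m+2) (by omega) (by omega) (Set.mem_image_of_mem _ hx)
  have fnp1 : ∀ x ∈ Set.Ico β₂ (1:ℝ), T^[n+1] x = x + c := by
    intro x hx
    obtain ⟨hf, hmem⟩ := key x hx (n-1) (by omega)
    have e : n - 1 + 1 = n := by omega
    rw [e] at hf hmem
    have hcast : ((n - 1 : ℕ) : ℝ) = (n : ℝ) - 1 := by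
      rw [Nat.cast_sub hn]; simp
    have hstep : T^[n+1] x = T^[n] x + γ₁ := by
      rw [Function.iterate_succ_apply']; exact hT1 _ hmem
    rw [hstep, hf, hcast, hc]; ring
  set s : ℝ := β₁ - c with hs
  obtain ⟨x₀, hx₀, hx₀m⟩ := hmeet
  obtain ⟨x₁, hx₁, hx₁m⟩ := hnotin
  have hx₀v : x₀ + c ∈ Set.Ico β₁ 1 := by rw [← fnp1 x₀ hx₀]; exact hx₀m
  have hx₁v : x₁ + c < β₁ := by
    by_contra h
    exact hx₁m ⟨by rw [fnp1 x₁ hx₁]; linarith,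
      ((hmap.iterate (n+1)) (hsub hx₁)).2⟩
  have hs1 : s < 1 := by have := hx₀v.1; have := hx₀.2; simp only [hs]; linarith
  have hβ₂s : β₂ < s := by have := hx₁.1; simp only [hs]; linarith
  have hcγ : -γ₁ < c := by have := hx₀v.1; have := hx₀.2; linarith
  have hset1 : {x ∈ Set.Ico β₂ (1:ℝ) | T^[n + 1] x < β₁} = Set.Ico β₂ s := by
    ext x
    simp only [Set.mem_setOf_eq, Set.mem_Ico]
    constructor
    · rintro ⟨⟨ha, hb⟩, hlt⟩
      rw [fnp1 x ⟨ha, hb⟩] at hlt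
      exact ⟨ha, by simp only [hs]; linarith⟩
    · rintro ⟨ha, hb⟩
      have hx1 : x < 1 := by linarith
      refine ⟨⟨ha, hx1⟩, ?_⟩
      rw [fnp1 x ⟨ha, hx1⟩]
      simp only [hs] at hb; linarith
  have hset2 : {x ∈ Set.Ico β₂ (1:ℝ) | β₁ ≤ T^[n + 1] x} = Set.Ico s 1 := by
    ext x
    simp only [Set.mem_setOf_eq, Set.mem_Ico]
    constructor
    · rintro ⟨⟨ha, hb⟩, hle⟩
      rw [fnp1 x ⟨ha, hb⟩] at hle
      exact ⟨by simp only [hs]; linarith, hb⟩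
    · rintro ⟨ha, hb⟩
      have hax : β₂ ≤ x := by linarith
      refine ⟨⟨hax, hb⟩, ?_⟩
      rw [fnp1 x ⟨hax, hb⟩]
      simp only [hs] at ha; linarith
  have himg1 : T^[n+1] '' Set.Ico s 1 = Set.Ico β₁ (1 + c) := by
    have he : T^[n+1] '' Set.Ico s 1 = (fun x => x + c) '' Set.Ico s 1 :=
      Set.image_congr fun x hx => fnp1 x ⟨by linarith [hx.1], hx.2⟩
    rw [he, Set.image_add_const_Ico]
    congr 1
    simp [hs]
  have hsub1 : T^[n + 1] '' Set.Ico s 1 ⊆ Set.Ico β₁ 1 := by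
    rintro y ⟨x, hx, rfl⟩
    have hxm : x ∈ Set.Ico β₂ (1:ℝ) := ⟨by linarith [hx.1], hx.2⟩
    refine ⟨?_, ((hmap.iterate (n+1)) (hsub hxm)).2⟩
    rw [fnp1 x hxm]
    have := hx.1; simp only [hs] at this; linarith
  have hinf : sInf (T^[n + 1] '' Set.Ico s 1) = β₁ := by
    rw [himg1]; exact csInf_Ico (by linarith)
  have fnp2 : ∀ x ∈ Set.Ico β₂ s, T^[n+2] x = x + c + γ₁ := by
    intro x hx
    have hxm : x ∈ Set.Ico β₂ (1:ℝ) := ⟨hx.1, by linarith [hx.2]⟩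
    have hmem : T^[n+1] x ∈ Set.Ico (0:ℝ) β₁ := by
      rw [fnp1 x hxm]
      constructor
      · have := hx.1
        have hnγ : (0:ℝ) ≤ (n:ℝ) * γ₁ := by positivity
        simp only [hc]; nlinarith
      · have := hx.2; simp only [hs] at this; linarith
    have : T^[n+2] x = T (T^[n+1] x) := Function.iterate_succ_apply' T (n+1) x
    rw [this, hT1 _ hmem, fnp1 x hxm]
  have himg2 : T^[n+2] '' Set.Ico β₂ s = Set.Ico (β₂ + c + γ₁) 1 := by
    have he : T^[n+2] '' Set.Ico β₂ s = (fun x => x + (c + γ₁)) '' Set.Ico β₂ s :=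
      Set.image_congr fun x hx => by rw [fnp2 x hx]; ring
    rw [he, Set.image_add_const_Ico]
    have e1 : β₂ + (c + γ₁) = β₂ + c + γ₁ := by ring
    have e2 : s + (c + γ₁) = 1 := by simp only [hs]; linarith
    rw [e1, e2]
  have hlow : β₁ < β₂ + c + γ₁ := by linarith
  have hhigh : β₂ + c + γ₁ < 1 := by simp only [hs] at hβ₂s; linarith
  have hsub2 : T^[n + 2] '' Set.Ico β₂ s ⊆ Set.Ico β₁ 1 := by
    rw [himg2]
    exact Set.Ico_subset_Ico (by linarith) le_rfl
  have hsup : sSup (closure (T^[n + 2] '' Set.Ico β₂ s)) = 1 := by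
    rw [himg2, closure_Ico (by linarith : β₂ + c + γ₁ ≠ 1)]
    exact csSup_Icc (by linarith)
  exact ⟨s, hβ₂s, hs1, hset1, hset2, hsub1, hinf, hsub2, hsup⟩
end

section
/- Let T be an ITM of three intervals on [0,1) with γ₁ > 0, γ₃ < 0, and suppose Δ₁ ∩ T([0,1)) = ∅ or Δ₃ ∩ T([0,1)) = ∅ (case (1), reducible). Then there is a T-invariant half-open interval Δ with T(Δ) ⊆ Δ, Δ regular, such that the first-return map T_Δ is an ITM of at most two intervals; in particular T is of finite type. -/
open Set

/-- A two-interval ITM on a trap `[a,b)` absorbing all of `[0,1)` in one step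
has an invariant "rotation" interval `[m+c₂, m+c₁)`, and the images of `[0,1)`
stabilize to it: finite type. -/
private lemma key_two_interval (T : ℝ → ℝ) (a m b c₁ c₂ : ℝ)
    (ham : a < m) (hmb : m < b)
    (hsub : Ico a b ⊆ Ico 0 1)
    (hL : ∀ x ∈ Ico a m, T x = x + c₁)
    (hR : ∀ x ∈ Ico m b, T x = x + c₂)
    (hc₁ : c₁ ≠ 0) (hc₂ : c₂ ≠ 0)
    (habs : ∀ x ∈ Ico (0:ℝ) 1, T x ∈ Ico a b) :
    ∃ n : ℕ, T^[n + 1] '' Ico (0:ℝ) 1 = T^[n] '' Ico (0:ℝ) 1 := by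
  have htrap : ∀ x ∈ Ico a b, T x ∈ Ico a b := fun x hx => habs x (hsub hx)
  -- c₁ > 0
  have hc1pos : 0 < c₁ := by
    have h := htrap a ⟨le_refl a, lt_trans ham hmb⟩
    rw [hL a ⟨le_refl a, ham⟩] at h
    rcases lt_or_eq_of_le (by linarith [h.1] : (0:ℝ) ≤ c₁) with h' | h'
    · exact h'
    · exact absurd h'.symm hc₁
  -- c₂ < 0
  have hc2neg : c₂ < 0 := by
    rcases lt_or_ge c₂ 0 with h | h
    · exact h
    have h0 : 0 < c₂ := lt_of_le_of_ne h (Ne.symm hc₂)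
    have hx : max m (b - c₂) ∈ Ico m b := ⟨le_max_left _ _, max_lt hmb (by linarith)⟩
    have h1 := htrap _ ⟨le_trans ham.le hx.1, hx.2⟩
    rw [hR _ hx] at h1
    have h2 : b - c₂ ≤ max m (b - c₂) := le_max_right _ _
    linarith [h1.2]
  have hm2 : a ≤ m + c₂ := by
    have h := htrap m ⟨ham.le, hmb⟩
    rw [hR m ⟨le_refl m, hmb⟩] at h
    exact h.1
  have hm1 : m + c₁ ≤ b := by
    by_contra h
    push_neg at h
    have hx : max a (b - c₁) ∈ Ico a m := ⟨le_max_left _ _, max_lt ham (by linarith)⟩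
    have h1 := htrap _ ⟨hx.1, lt_trans hx.2 hmb⟩
    rw [hL _ hx] at h1
    have h2 : b - c₁ ≤ max a (b - c₁) := le_max_right _ _
    linarith [h1.2]
  -- the rotation interval Δ' = [m+c₂, m+c₁)
  have hinv : ∀ y ∈ Ico (m + c₂) (m + c₁), T y ∈ Ico (m + c₂) (m + c₁) := by
    intro y hy
    rcases lt_or_ge y m with hym | hym
    · rw [hL y ⟨le_trans hm2 hy.1, hym⟩]
      exact ⟨by linarith [hy.1], by linarith⟩
    · rw [hR y ⟨hym, lt_of_lt_of_le hy.2 hm1⟩]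
      exact ⟨by linarith, by linarith [hy.2]⟩
  have hsurj : Ico (m + c₂) (m + c₁) ⊆ T '' Ico (m + c₂) (m + c₁) := by
    intro z hz
    rcases lt_or_ge z (m + c₂ + c₁) with h | h
    · refine ⟨z - c₂, ⟨by linarith [hz.1], by linarith⟩, ?_⟩
      rw [hR (z - c₂) ⟨by linarith [hz.1], by linarith⟩]
      ring
    · refine ⟨z - c₁, ⟨by linarith, by linarith [hz.2]⟩, ?_⟩
      rw [hL (z - c₁) ⟨by linarith, by linarith [hz.2]⟩]
      ring
  have himg : T '' Ico (m + c₂) (m + c₁) = Ico (m + c₂) (m + c₁) := by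
    refine Subset.antisymm ?_ hsurj
    rintro _ ⟨y, hy, rfl⟩
    exact hinv y hy
  -- the potential
  set φ : ℝ → ℝ := fun y => if y < m + c₂ then m + c₂ - y else y - (m + c₁) with hφ
  set δ : ℝ := min c₁ (-c₂) with hδdef
  have hδ : 0 < δ := lt_min hc1pos (by linarith)
  have hδ1 : δ ≤ c₁ := min_le_left _ _
  have hδ2 : δ ≤ -c₂ := min_le_right _ _
  -- the main claim
  have claim : ∀ k : ℕ, ∀ y ∈ Ico a b, T^[k] y ∈ Ico (m + c₂) (m + c₁) ∨
      (T^[k] y ∈ Ico a b ∧ T^[k] y ∉ Ico (m + c₂) (m + c₁) ∧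
        φ (T^[k] y) + (k : ℝ) * δ ≤ b - a) := by
    intro k
    induction k with
    | zero =>
      intro y hy
      by_cases hmem : y ∈ Ico (m + c₂) (m + c₁)
      · left; simpa using hmem
      · right
        refine ⟨by simpa using hy, by simpa using hmem, ?_⟩
        simp only [Function.iterate_zero, id_eq, Nat.cast_zero, zero_mul, add_zero, hφ]
        split_ifs with h
        · linarith [hy.1]
        · linarith [hy.2, ham]
    | succ k ih =>
      intro y hy
      rcases ih y hy with hz | ⟨hzab, hznot, hφz⟩
      · left
        rw [Function.iterate_succ_apply']
        exact hinv _ hz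
      · set z := T^[k] y with hzdef
        rw [Function.iterate_succ_apply']
        rcases lt_or_ge z (m + c₂) with hzl | hzr
        · -- z on the left, moves right by c₁
          have hzm : z ∈ Ico a m := ⟨hzab.1, by linarith⟩
          have hTz : T z = z + c₁ := hL z hzm
          by_cases hmem : T z ∈ Ico (m + c₂) (m + c₁)
          · left; exact hmem
          · right
            refine ⟨htrap z hzab, hmem, ?_⟩
            have hlt : z + c₁ < m + c₁ := by linarith
            have hlt2 : z + c₁ < m + c₂ := by
              by_contra hcon
              push_neg at hcon
              exact hmem (by rw [hTz]; exact ⟨hcon, hlt⟩)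
            have hφz' : φ z = m + c₂ - z := by simp only [hφ]; rw [if_pos hzl]
            have hφT : φ (T z) = m + c₂ - (z + c₁) := by
              simp only [hφ]; rw [hTz, if_pos hlt2]
            rw [hφT]
            rw [hφz'] at hφz
            push_cast
            linarith
        · -- z on the right (z ∉ Δ' and z ≥ m+c₂ means z ≥ m+c₁)
          have hzr' : m + c₁ ≤ z := by
            by_contra hcon
            push_neg at hcon
            exact hznot ⟨hzr, hcon⟩
          have hzm : z ∈ Ico m b := ⟨by linarith, hzab.2⟩
          have hTz : T z = z + c₂ := hR z hzm
          by_cases hmem : T z ∈ Ico (m + c₂) (m + c₁)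
          · left; exact hmem
          · right
            refine ⟨htrap z hzab, hmem, ?_⟩
            have hge : m + c₂ ≤ z + c₂ := by linarith
            have hge2 : m + c₁ ≤ z + c₂ := by
              by_contra hcon
              push_neg at hcon
              exact hmem (by rw [hTz]; exact ⟨hge, hcon⟩)
            have hφz' : φ z = z - (m + c₁) := by
              simp only [hφ]; rw [if_neg (by linarith)]
            have hφT : φ (T z) = z + c₂ - (m + c₁) := by
              simp only [hφ]; rw [hTz, if_neg (by linarith)]
            rw [hφT]
            rw [hφz'] at hφz
            push_cast
            linarith
  -- absorption time
  obtain ⟨K, hK⟩ := exists_nat_gt ((b - a) / δ)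
  have hKδ : b - a < (K : ℝ) * δ := by
    rwa [div_lt_iff₀ hδ] at hK
  have habsK : ∀ y ∈ Ico a b, T^[K] y ∈ Ico (m + c₂) (m + c₁) := by
    intro y hy
    rcases claim K y hy with h | ⟨hzab, hznot, hφz⟩
    · exact h
    · exfalso
      have hφnn : 0 ≤ φ (T^[K] y) := by
        simp only [hφ]
        split_ifs with h
        · linarith
        · push_neg at h
          have : m + c₁ ≤ T^[K] y := by
            by_contra hcon
            push_neg at hcon
            exact hznot ⟨h, hcon⟩
          linarith
      linarith
  have habsK1 : ∀ x ∈ Ico (0:ℝ) 1, T^[K + 1] x ∈ Ico (m + c₂) (m + c₁) := by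
    intro x hx
    rw [Function.iterate_succ_apply]
    exact habsK _ (habs x hx)
  have hsubΔ' : Ico (m + c₂) (m + c₁) ⊆ Ico (0:ℝ) 1 :=
    fun z hz => hsub ⟨le_trans hm2 hz.1, lt_of_lt_of_le hz.2 hm1⟩
  have hIter : ∀ n : ℕ, T^[n] '' Ico (m + c₂) (m + c₁) = Ico (m + c₂) (m + c₁) := by
    intro n
    induction n with
    | zero => simp
    | succ n ih =>
      rw [Function.iterate_succ', Set.image_comp, ih, himg]
  have himgK : ∀ n : ℕ, K + 1 ≤ n → T^[n] '' Ico (0:ℝ) 1 = Ico (m + c₂) (m + c₁) := by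
    intro n hn
    refine Subset.antisymm ?_ ?_
    · rintro _ ⟨x, hx, rfl⟩
      obtain ⟨j, rfl⟩ := Nat.exists_eq_add_of_le hn
      have hz : T^[K + 1] x ∈ Ico (m + c₂) (m + c₁) := habsK1 _ hx
      have hj : T^[j] (T^[K + 1] x) ∈ Ico (m + c₂) (m + c₁) := by
        rw [← hIter j]; exact ⟨_, hz, rfl⟩
      rw [add_comm (K + 1) j, Function.iterate_add_apply]
      exact hj
    · intro z hz
      have : z ∈ T^[n] '' Ico (m + c₂) (m + c₁) := (hIter n).symm ▸ hz
      exact Set.image_mono hsubΔ' this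
  refine ⟨K + 1, ?_⟩
  rw [himgK (K + 1) le_rfl, himgK (K + 1 + 1) (by omega)]

/-- The reducible case for an ITM of three intervals: if `Δ₁` or `Δ₃` misses
`T([0,1))`, then there is a regular trap interval `Δ` on which the
first-return map (`= T|_Δ`) is an ITM of at most two intervals; in
particular `T` is of finite type. -/
theorem reducible_case_finite_type
    (β₁ β₂ γ₁ γ₂ γ₃ : ℝ) (T : ℝ → ℝ)
    (h0 : 0 < β₁) (h1 : β₁ < β₂) (h2 : β₂ < 1)
    (hT1 : ∀ x ∈ Set.Ico (0:ℝ) β₁, T x = x + γ₁)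
    (hT2 : ∀ x ∈ Set.Ico β₁ β₂, T x = x + γ₂)
    (hT3 : ∀ x ∈ Set.Ico β₂ (1:ℝ), T x = x + γ₃)
    (hmap : Set.MapsTo T (Set.Ico 0 1) (Set.Ico 0 1))
    (hγ₁ : γ₁ ≠ 0) (hγ₂ : γ₂ ≠ 0) (hγ₃ : γ₃ ≠ 0)
    (hred : Set.Ico (0:ℝ) β₁ ∩ T '' Set.Ico 0 1 = ∅ ∨
            Set.Ico β₂ (1:ℝ) ∩ T '' Set.Ico 0 1 = ∅) :
    (∃ a b : ℝ, a < b ∧ Set.Ico a b ⊆ Set.Ico 0 1 ∧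
      -- `Δ = [a, b)` is a trap
      T '' Set.Ico a b ⊆ Set.Ico a b ∧
      -- `Δ` is regular
      (∃ N : ℕ, ∀ x ∈ Set.Ico (0:ℝ) 1, ∃ n : ℕ, 1 ≤ n ∧ n < N ∧
        T^[n] x ∈ Set.Ico a b) ∧
      -- the first-return map `T_Δ = T|_Δ` is an ITM of at most two intervals
      (∃ m c₁ c₂ : ℝ, a ≤ m ∧ m ≤ b ∧
        (∀ x ∈ Set.Ico a m, T x = x + c₁) ∧
        (∀ x ∈ Set.Ico m b, T x = x + c₂))) ∧
    -- in particular, `T` is of finite type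
    (∃ n : ℕ, T^[n + 1] '' Set.Ico (0:ℝ) 1 = T^[n] '' Set.Ico (0:ℝ) 1) := by
  rcases hred with hred | hred
  · -- Δ₁ misses the image: trap is [β₁, 1)
    have habs : ∀ x ∈ Set.Ico (0:ℝ) 1, T x ∈ Set.Ico β₁ 1 := by
      intro x hx
      have h := hmap hx
      have hβ : β₁ ≤ T x := by
        by_contra hcon
        push_neg at hcon
        have : T x ∈ Set.Ico (0:ℝ) β₁ ∩ T '' Set.Ico 0 1 :=
          ⟨⟨h.1, hcon⟩, ⟨x, hx, rfl⟩⟩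
        rw [hred] at this
        exact this
      exact ⟨hβ, h.2⟩
    have hsub : Set.Ico β₁ (1:ℝ) ⊆ Set.Ico 0 1 :=
      Set.Ico_subset_Ico h0.le le_rfl
    constructor
    · refine ⟨β₁, 1, lt_trans h1 h2, hsub, ?_, ⟨2, ?_⟩, ⟨β₂, γ₂, γ₃, h1.le, h2.le, hT2, hT3⟩⟩
      · rintro _ ⟨x, hx, rfl⟩
        exact habs x (hsub hx)
      · intro x hx
        exact ⟨1, le_rfl, one_lt_two, by simpa using habs x hx⟩
    · exact key_two_interval T β₁ β₂ 1 γ₂ γ₃ h1 h2 hsub hT2 hT3 hγ₂ hγ₃ habs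
  · -- Δ₃ misses the image: trap is [0, β₂)
    have habs : ∀ x ∈ Set.Ico (0:ℝ) 1, T x ∈ Set.Ico 0 β₂ := by
      intro x hx
      have h := hmap hx
      have hβ : T x < β₂ := by
        by_contra hcon
        push_neg at hcon
        have : T x ∈ Set.Ico β₂ (1:ℝ) ∩ T '' Set.Ico 0 1 :=
          ⟨⟨hcon, h.2⟩, ⟨x, hx, rfl⟩⟩
        rw [hred] at this
        exact this
      exact ⟨h.1, hβ⟩
    have hsub : Set.Ico (0:ℝ) β₂ ⊆ Set.Ico 0 1 :=
      Set.Ico_subset_Ico le_rfl h2.le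
    constructor
    · refine ⟨0, β₂, lt_trans h0 h1, hsub, ?_, ⟨2, ?_⟩, ⟨β₁, γ₁, γ₂, h0.le, h1.le, hT1, hT2⟩⟩
      · rintro _ ⟨x, hx, rfl⟩
        exact habs x (hsub hx)
      · intro x hx
        exact ⟨1, le_rfl, one_lt_two, by simpa using habs x hx⟩
    · exact key_two_interval T 0 β₁ β₂ γ₁ γ₂ h0 h1 hsub hT1 hT2 hγ₁ hγ₂ habs
end
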